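/- arXiv:1306.0057 — 3 statements merged into one kernel-verified Lean document; each statement's English description precedes it below -/
import Mathlib

section
/- Let T be a rooted spanning tree with the running intersection property on index sets γ_1,...,γ_l, with α_k = γ_k ∩ γ_{pa(k)} (and α_k = ∅ at the root). If an element i ∈ γ_k \ α_k is contained in γ_j for some j ≠ k, then γ_j is a descendant of γ_k in T. -/
/-- The intersection graph of the index sets `γ₁, …, γ_l`. -/
def interGraph {l n : ℕ} (γ : Fin l → Finset (Fin n)) : SimpleGraph (Fin l) where
  Adj i j := i ≠ j ∧ (γ i ∩ γ j).Nonempty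
  symm := ⟨fun i j h => ⟨h.1.symm, by simp [Finset.inter_comm]; exact h.2⟩⟩
  loopless := ⟨fun i h => h.1 rfl⟩

/-- The running intersection property for a tree `T` on the index sets:
`γ i ∩ γ j ⊆ γ k` whenever `γ k` lies on the path between `γ i` and `γ j` in `T`. -/
def RIP {l n : ℕ} (γ : Fin l → Finset (Fin n)) (T : SimpleGraph (Fin l)) : Prop :=
  ∀ (i j k : Fin l) (p : T.Walk i j), p.IsPath → k ∈ p.support → γ i ∩ γ j ⊆ γ k

theorem stmt5 {l n : ℕ} (γ : Fin l → Finset (Fin n))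
    (hmax : ∀ i j, i ≠ j → ¬ γ i ⊆ γ j)
    (T : SimpleGraph (Fin l)) (hTsub : T ≤ interGraph γ) (hTtree : T.IsTree)
    (hrip : RIP γ T)
    (r : Fin l) (pa : Fin l → Fin l) (hparoot : pa r = r)
    (hpa : ∀ k, k ≠ r → T.Adj k (pa k) ∧ T.dist (pa k) r < T.dist k r) :
    ∀ (i : Fin n) (k j : Fin l),
      i ∈ γ k \ (if k = r then (∅ : Finset (Fin n)) else γ k ∩ γ (pa k)) →
      j ≠ k → i ∈ γ j → ∃ m : ℕ, pa^[m] j = k := by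
  have hconn := hTtree.isConnected
  have hac := hTtree.IsAcyclic
  -- a vertex at distance 0 from r is r
  have hzero : ∀ u : Fin l, T.dist u r = 0 → u = r := fun u hu =>
    hconn.dist_eq_zero_iff.mp hu
  -- every vertex reaches the root by iterating pa
  have rootreach : ∀ (d : ℕ) (u : Fin l), T.dist u r ≤ d → ∃ m, pa^[m] u = r := by
    intro d
    induction d with
    | zero => intro u hu; exact ⟨0, hzero u (Nat.le_zero.mp hu)⟩
    | succ d ih =>
      intro u hu
      by_cases h : u = r
      · exact ⟨0, h⟩
      · obtain ⟨m, hm⟩ := ih (pa u) (by have := (hpa u h).2; omega)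
        exact ⟨m + 1, by rw [Function.iterate_succ_apply, hm]⟩
  -- a strictly closer neighbor of u is the parent of u
  have closer : ∀ u v : Fin l, u ≠ r → T.Adj u v → T.dist v r < T.dist u r → v = pa u := by
    intro u v hur huv hlt
    obtain ⟨P1, hP1⟩ := hconn.exists_walk_length_eq_dist v r
    obtain ⟨P2, hP2⟩ := hconn.exists_walk_length_eq_dist (pa u) r
    have hd1 : T.dist u r ≤ T.dist v r + 1 := by
      have := hconn.dist_triangle (u := u) (v := v) (w := r)
      have h1 : T.dist u v = 1 := SimpleGraph.dist_eq_one_iff_adj.mpr huv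
      omega
    have hd2 : T.dist u r ≤ T.dist (pa u) r + 1 := by
      have := hconn.dist_triangle (u := u) (v := pa u) (w := r)
      have h1 : T.dist u (pa u) = 1 := SimpleGraph.dist_eq_one_iff_adj.mpr (hpa u hur).1
      omega
    have hlt2 := (hpa u hur).2
    have hQ1 : (SimpleGraph.Walk.cons huv P1).length = T.dist u r := by
      simp [SimpleGraph.Walk.length_cons, hP1]; omega
    have hQ2 : (SimpleGraph.Walk.cons (hpa u hur).1 P2).length = T.dist u r := by
      simp [SimpleGraph.Walk.length_cons, hP2]; omega
    have hp1 : (SimpleGraph.Walk.cons huv P1).IsPath :=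
      SimpleGraph.Walk.isPath_of_length_eq_dist _ hQ1
    have hp2 : (SimpleGraph.Walk.cons (hpa u hur).1 P2).IsPath :=
      SimpleGraph.Walk.isPath_of_length_eq_dist _ hQ2
    have heq := hac.path_unique ⟨_, hp1⟩ ⟨_, hp2⟩
    have heqw : SimpleGraph.Walk.cons huv P1 = SimpleGraph.Walk.cons (hpa u hur).1 P2 :=
      congrArg Subtype.val heq
    have hsup := congrArg SimpleGraph.Walk.support heqw
    rw [SimpleGraph.Walk.support_cons, SimpleGraph.Walk.support_cons,
      P1.support_eq_cons, P2.support_eq_cons] at hsup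
    injection hsup with _ h2
    injection h2 with h3 _
  -- adjacent vertices are at different distances from r
  have nodiff : ∀ u v : Fin l, T.Adj u v → T.dist u r ≠ T.dist v r := by
    intro u v huv heq
    by_cases hur : u = r
    · have hv : v = r := hzero v (by rw [← heq, hur, SimpleGraph.dist_self])
      rw [hur, hv] at huv
      exact T.loopless.irrefl r huv
    obtain ⟨Pu, hPu⟩ := hconn.exists_walk_length_eq_dist u r
    obtain ⟨Pv, hPv⟩ := hconn.exists_walk_length_eq_dist v r
    have hPup : Pu.IsPath := SimpleGraph.Walk.isPath_of_length_eq_dist _ hPu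
    have hPvp : Pv.IsPath := SimpleGraph.Walk.isPath_of_length_eq_dist _ hPv
    have hvns : v ∉ Pu.support := by
      intro hv
      have hsp := congrArg SimpleGraph.Walk.length (Pu.take_spec hv)
      rw [SimpleGraph.Walk.length_append] at hsp
      have hdrop : T.dist v r ≤ (Pu.dropUntil v hv).length := SimpleGraph.dist_le _
      have htake : T.dist u v ≤ (Pu.takeUntil v hv).length := SimpleGraph.dist_le _
      have huv1 : T.dist u v = 1 := SimpleGraph.dist_eq_one_iff_adj.mpr huv
      omega
    have hQ : (SimpleGraph.Walk.cons huv.symm Pu).IsPath := hPup.cons hvns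
    have heq2 := hac.path_unique ⟨_, hQ⟩ ⟨_, hPvp⟩
    have hlen := congrArg (fun p : T.Path v r => p.val.length) heq2
    simp only [SimpleGraph.Walk.length_cons] at hlen
    rw [hPu, hPv] at hlen
    omega
  -- an edge connects a parent and a child
  have dichot : ∀ u v : Fin l, T.Adj u v → v = pa u ∨ u = pa v := by
    intro u v huv
    rcases Nat.lt_or_ge (T.dist v r) (T.dist u r) with h | h
    · have hur : u ≠ r := by
        intro hu; subst hu; rw [SimpleGraph.dist_self] at h; omega
      exact Or.inl (closer u v hur huv h)
    · have h' : T.dist u r < T.dist v r := by have := nodiff u v huv; omega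
      have hvr : v ≠ r := by
        intro hv; subst hv; rw [SimpleGraph.dist_self] at h'; omega
      exact Or.inr (closer v u hvr huv.symm h')
  intro i k j hik hjk hij
  -- descendants propagate along paths avoiding k
  have reach : ∀ {c j' : Fin l} (Q : T.Walk c j'), Q.IsPath → k ∉ Q.support →
      (∃ m, pa^[m] c = k) → ∃ m, pa^[m] j' = k := by
    intro c j' Q
    induction Q with
    | nil => exact fun _ _ h => h
    | @cons a b c' hab Q ih =>
      intro hpath hk hm
      obtain ⟨m, hm⟩ := hm
      have hk' : k ∉ Q.support := by
        rw [SimpleGraph.Walk.support_cons] at hk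
        exact fun h => hk (List.mem_cons_of_mem _ h)
      apply ih hpath.of_cons hk'
      rcases dichot a b hab with hb | ha
      · have hak : a ≠ k := by
          intro h
          exact hk (by rw [SimpleGraph.Walk.support_cons, h]; exact List.mem_cons_self)
        cases m with
        | zero => exact absurd hm hak
        | succ m =>
          rw [Function.iterate_succ_apply] at hm
          exact ⟨m, hb ▸ hm⟩
      · exact ⟨m + 1, by rw [Function.iterate_succ_apply, ← ha, hm]⟩
  by_cases hk : k = r
  · subst hk
    exact rootreach (T.dist j k) j le_rfl
  · rw [if_neg hk, Finset.mem_sdiff, Finset.mem_inter] at hik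
    obtain ⟨hik1, hik2⟩ := hik
    -- take the path from k to j
    obtain ⟨W0⟩ := hconn.preconnected k j
    set W : T.Path k j := W0.toPath with hW
    have hWp : W.val.IsPath := W.2
    have hmem : ∀ v ∈ W.val.support, i ∈ γ v := by
      intro v hv
      exact hrip k j v W.val hWp hv (Finset.mem_inter.mpr ⟨hik1, hij⟩)
    clear_value W
    obtain ⟨W, hWp'⟩ := W
    cases W with
    | nil => exact absurd rfl hjk
    | @cons _ b _ hkb Q =>
      rcases dichot k b hkb with hb | hk'
      · exfalso
        have hbmem : b ∈ (SimpleGraph.Walk.cons hkb Q).support := by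
          rw [SimpleGraph.Walk.support_cons]
          exact List.mem_cons_of_mem _ Q.start_mem_support
        have : i ∈ γ b := hmem b hbmem
        exact hik2 ⟨hik1, hb ▸ this⟩
      · have hQpath : Q.IsPath ∧ k ∉ Q.support :=
          (SimpleGraph.Walk.cons_isPath_iff _ _).mp hWp'
        exact reach Q hQpath.1 hQpath.2 ⟨1, by rw [Function.iterate_one, ← hk']⟩
end

section
/- Let T be a rooted spanning tree with the running intersection property on index sets γ_1,...,γ_l covering {1,...,n}, with α_j = γ_j ∩ γ_{pa(j)}. A vector x̃ = (x̃_1,...,x̃_l) with x̃_k ∈ R^{|γ_k|} satisfies E_{α_j}(E_{γ_j}^T x̃_j − E_{γ_k}^T x̃_k) = 0 for all k and all children γ_j of γ_k in T if and only if there exists x ∈ R^n with x̃_k = E_{γ_k} x for all k. -/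
/-- `E_γ` : extraction of the subvector of `x` indexed by `γ`. -/
def Eext {n : ℕ} (γ : Finset (Fin n)) (x : Fin n → ℝ) : {i // i ∈ γ} → ℝ :=
  fun i => x i.1

/-- `E_γᵀ` : embedding of a `|γ|`-vector into `ℝⁿ` by zero-filling. -/
def Eemb {n : ℕ} (γ : Finset (Fin n)) (y : {i // i ∈ γ} → ℝ) : Fin n → ℝ :=
  fun i => if h : i ∈ γ then y ⟨i, h⟩ else 0

open SimpleGraph

/-- On a shortest path to `r`, any interior vertex is strictly closer to `r`. -/
lemma mem_shortest_dist_lt {V : Type*} [DecidableEq V] {T : SimpleGraph V} {a b r : V}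
    (p : T.Walk a r) (hlen : p.length = T.dist a r)
    (hb : b ∈ p.support) (hba : b ≠ a) : T.dist b r < T.dist a r := by
  have hspec := p.take_spec hb
  have hlen2 : (p.takeUntil b hb).length + (p.dropUntil b hb).length = p.length := by
    conv_rhs => rw [← hspec]
    exact (SimpleGraph.Walk.length_append _ _).symm
  have h1 : 1 ≤ (p.takeUntil b hb).length := by
    rcases Nat.eq_zero_or_pos (p.takeUntil b hb).length with h0 | h0
    · exact absurd (SimpleGraph.Walk.eq_of_length_eq_zero h0) (Ne.symm hba)
    · exact h0
  have h2 : T.dist b r ≤ (p.dropUntil b hb).length := SimpleGraph.dist_le _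
  omega

/-- In a tree, the neighbour strictly closer to the root is unique. -/
lemma closer_neighbor_unique {V : Type*} [DecidableEq V] {T : SimpleGraph V} (hT : T.IsTree)
    {a b c r : V} (hab : T.Adj a b) (hac : T.Adj a c)
    (hb : T.dist b r < T.dist a r) (hc : T.dist c r < T.dist a r) : b = c := by
  obtain ⟨qb, hqbp, hqbl⟩ := hT.isConnected.exists_path_of_dist b r
  obtain ⟨qc, hqcp, hqcl⟩ := hT.isConnected.exists_path_of_dist c r
  have hanb : a ∉ qb.support := by
    intro ha
    rcases eq_or_ne a b with rfl | hne
    · exact hab.ne rfl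
    · exact absurd (mem_shortest_dist_lt qb hqbl ha hne) (by omega)
  have hanc : a ∉ qc.support := by
    intro ha
    rcases eq_or_ne a c with rfl | hne
    · exact hac.ne rfl
    · exact absurd (mem_shortest_dist_lt qc hqcl ha hne) (by omega)
  have hpb : (SimpleGraph.Walk.cons hab qb).IsPath :=
    (SimpleGraph.Walk.cons_isPath_iff _ _).2 ⟨hqbp, hanb⟩
  have hpc : (SimpleGraph.Walk.cons hac qc).IsPath :=
    (SimpleGraph.Walk.cons_isPath_iff _ _).2 ⟨hqcp, hanc⟩
  have huniq := hT.existsUnique_path a r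
  have heq : SimpleGraph.Walk.cons hab qb = SimpleGraph.Walk.cons hac qc :=
    huniq.unique hpb hpc
  have := congrArg (fun w => SimpleGraph.Walk.getVert w 1) heq
  simpa [SimpleGraph.Walk.getVert_cons] using this

/-- In a tree, adjacent vertices have different distances to `r`. -/
lemma adj_dist_ne {V : Type*} [DecidableEq V] {T : SimpleGraph V} (hT : T.IsTree)
    {a b r : V} (hab : T.Adj a b) : T.dist a r ≠ T.dist b r := by
  intro hd
  obtain ⟨qa, hqap, hqal⟩ := hT.isConnected.exists_path_of_dist a r
  obtain ⟨qb, hqbp, hqbl⟩ := hT.isConnected.exists_path_of_dist b r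
  have hbna : b ∉ qa.support := by
    intro hbs
    exact absurd (mem_shortest_dist_lt qa hqal hbs hab.ne') (by omega)
  have hpath : (SimpleGraph.Walk.cons hab.symm qa).IsPath :=
    (SimpleGraph.Walk.cons_isPath_iff _ _).2 ⟨hqap, hbna⟩
  have heq : SimpleGraph.Walk.cons hab.symm qa = qb :=
    (hT.existsUnique_path b r).unique hpath hqbp
  have := congrArg SimpleGraph.Walk.length heq
  simp only [SimpleGraph.Walk.length_cons] at this
  omega

theorem stmt7 {l n : ℕ} (γ : Fin l → Finset (Fin n))
    (hcover : ∀ i : Fin n, ∃ k, i ∈ γ k)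
    (T : SimpleGraph (Fin l)) (hTsub : T ≤ interGraph γ) (hTtree : T.IsTree)
    (hrip : RIP γ T)
    (r : Fin l) (pa : Fin l → Fin l) (hparoot : pa r = r)
    (hpa : ∀ k, k ≠ r → T.Adj k (pa k) ∧ T.dist (pa k) r < T.dist k r)
    (xt : (k : Fin l) → ({i // i ∈ γ k} → ℝ)) :
    (∀ k j, j ≠ r → pa j = k →
        Eext (if j = r then (∅ : Finset (Fin n)) else γ j ∩ γ (pa j))
          (Eemb (γ j) (xt j) - Eemb (γ k) (xt k)) = 0)
    ↔ ∃ x : Fin n → ℝ, ∀ k, xt k = Eext (γ k) x := by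
  constructor
  · intro H
    -- every tree edge is a parent/child edge (in one direction)
    have edge_pc : ∀ a b : Fin l, T.Adj a b → (a ≠ r ∧ pa a = b) ∨ (b ≠ r ∧ pa b = a) := by
      intro a b hab
      rcases eq_or_ne a r with hae | har
      · have hbr : b ≠ r := hae ▸ hab.ne'
        obtain ⟨hadj, hlt⟩ := hpa b hbr
        have hd : T.dist a r < T.dist b r := by
          have h0 : T.dist a r = 0 := by rw [hae]; simp
          have : 0 < T.dist b r := hTtree.isConnected.pos_dist_of_ne hbr
          omega
        exact Or.inr ⟨hbr, closer_neighbor_unique hTtree hadj hab.symm hlt hd⟩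
      · rcases eq_or_ne b r with hbe | hbr
        · obtain ⟨hadj, hlt⟩ := hpa a har
          have hd : T.dist b r < T.dist a r := by
            have h0 : T.dist b r = 0 := by rw [hbe]; simp
            have : 0 < T.dist a r := hTtree.isConnected.pos_dist_of_ne har
            omega
          exact Or.inl ⟨har, closer_neighbor_unique hTtree hadj hab hlt hd⟩
        · have hne := adj_dist_ne hTtree hab (r := r)
          rcases lt_or_gt_of_ne hne with hlt | hlt
          · obtain ⟨hadj, hlt'⟩ := hpa b hbr
            exact Or.inr ⟨hbr, closer_neighbor_unique hTtree hadj hab.symm hlt' hlt⟩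
          · obtain ⟨hadj, hlt'⟩ := hpa a har
            exact Or.inl ⟨har, closer_neighbor_unique hTtree hadj hab hlt' hlt⟩
    -- agreement across one edge
    have edge_agree : ∀ a b : Fin l, T.Adj a b → ∀ (i : Fin n) (hia : i ∈ γ a)
        (hib : i ∈ γ b), xt a ⟨i, hia⟩ = xt b ⟨i, hib⟩ := by
      have key : ∀ a b : Fin l, a ≠ r → pa a = b → ∀ (i : Fin n) (hia : i ∈ γ a)
          (hib : i ∈ γ b), xt a ⟨i, hia⟩ = xt b ⟨i, hib⟩ := by
        intro a b har hpab i hia hib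
        have h := H b a har hpab
        have hmem : i ∈ (if a = r then (∅ : Finset (Fin n)) else γ a ∩ γ (pa a)) := by
          simp only [if_neg har, hpab]
          exact Finset.mem_inter.2 ⟨hia, hib⟩
        have := congrFun h ⟨i, hmem⟩
        simp only [Eext, Pi.sub_apply, Pi.zero_apply, Eemb, dif_pos hia, dif_pos hib] at this
        linarith
      intro a b hab i hia hib
      rcases edge_pc a b hab with ⟨har, hpab⟩ | ⟨hbr, hpba⟩
      · exact key a b har hpab i hia hib
      · exact (key b a hbr hpba i hib hia).symm
    -- agreement along any path all of whose vertices contain i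
    have path_agree : ∀ (i : Fin n) {a b : Fin l} (p : T.Walk a b),
        (∀ m ∈ p.support, i ∈ γ m) →
        ∀ (hia : i ∈ γ a) (hib : i ∈ γ b), xt a ⟨i, hia⟩ = xt b ⟨i, hib⟩ := by
      intro i a b p
      induction p with
      | nil => intro _ hia hib; rfl
      | cons h q ih =>
        intro hmem hia hib
        have him : i ∈ γ _ := hmem _ (by
          rw [SimpleGraph.Walk.support_cons]
          exact List.mem_cons_of_mem _ q.start_mem_support)
        have hstep := edge_agree _ _ h i hia him
        rw [hstep]
        exact ih (fun m hm => hmem m (by simp [hm])) him hib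
    -- global agreement via RIP
    have agree : ∀ (i : Fin n) (a b : Fin l) (hia : i ∈ γ a) (hib : i ∈ γ b),
        xt a ⟨i, hia⟩ = xt b ⟨i, hib⟩ := by
      intro i a b hia hib
      obtain ⟨p, hp⟩ := (hTtree.existsUnique_path a b).exists
      have hmem : ∀ m ∈ p.support, i ∈ γ m := fun m hm =>
        hrip a b m p hp hm (Finset.mem_inter.2 ⟨hia, hib⟩)
      exact path_agree i p hmem hia hib
    refine ⟨fun i => xt (hcover i).choose ⟨i, (hcover i).choose_spec⟩, fun k => ?_⟩
    funext ⟨i, hi⟩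
    exact agree i k _ hi (hcover i).choose_spec
  · rintro ⟨x, hx⟩ k j hjr hpj
    funext ⟨i, hi⟩
    rw [if_neg hjr] at hi
    obtain ⟨hij, hik⟩ := Finset.mem_inter.1 hi
    rw [hpj] at hik
    simp only [Eext, Pi.sub_apply, Pi.zero_apply, Eemb, hx j, hx k, dif_pos hij, dif_pos hik,
      Eext, sub_self]
end

section
/- Let V = range(E) with E the stacked matrix of blocks E_{γ_k}, let T be a rooted spanning tree with the running intersection property on index sets γ_1,...,γ_l, and let α_j = γ_j ∩ γ_{pa(j)} (α_root = ∅). A tuple s̃ = (s̃_1,...,s̃_l) lies in the orthogonal complement V^⊥ if and only if there exist vectors u_j ∈ R^{|α_j|}, j = 1,...,l, such that s̃_k = E_{γ_k}( E_{α_k}^T u_k − ∑_{γ_j ∈ ch(γ_k)} E_{α_j}^T u_j ) for every k, where ch(γ_k) denotes the children of γ_k in T. -/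
/-- The stacked linear map `E` with row blocks `E_{γ_k}`. -/
noncomputable def Emap {n l : ℕ} (γ : Fin l → Finset (Fin n)) :
    EuclideanSpace ℝ (Fin n) →ₗ[ℝ]
      EuclideanSpace ℝ ((k : Fin l) × {i : Fin n // i ∈ γ k}) where
  toFun x := WithLp.toLp 2 (fun q => x q.2.1)
  map_add' := fun _ _ => rfl
  map_smul' := fun _ _ => rfl

open SimpleGraph

section Aux
variable {l : ℕ} (pa : Fin l → Fin l)

/-- `Desc pa k m` : `k` is an ancestor (or equal) of `m` under the parent map `pa`. -/
def Desc (k m : Fin l) : Prop := ∃ s : ℕ, pa^[s] m = k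

lemma desc_refl (k : Fin l) : Desc pa k k := ⟨0, rfl⟩

lemma desc_pa {k m : Fin l} (h : Desc pa k m) : Desc pa (pa k) m := by
  obtain ⟨s, hs⟩ := h; exact ⟨s + 1, by rw [Function.iterate_succ_apply', hs]⟩

lemma desc_of_pa {k m : Fin l} (h : Desc pa k (pa m)) : Desc pa k m := by
  obtain ⟨s, hs⟩ := h; exact ⟨s + 1, by rw [Function.iterate_succ_apply]; exact hs⟩

lemma desc_of_ne {k m : Fin l} (h : Desc pa k m) (hne : k ≠ m) : Desc pa k (pa m) := by
  obtain ⟨s, hs⟩ := h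
  cases s with
  | zero => exact absurd hs.symm hne
  | succ t => exact ⟨t, by rw [← Function.iterate_succ_apply]; exact hs⟩

lemma desc_trans {a b c : Fin l} (h1 : Desc pa a b) (h2 : Desc pa b c) : Desc pa a c := by
  obtain ⟨s, hs⟩ := h1; obtain ⟨t, ht⟩ := h2
  exact ⟨s + t, by rw [Function.iterate_add_apply, ht, hs]⟩

variable (T : SimpleGraph (Fin l)) (r : Fin l)
variable (hparoot : pa r = r)
variable (hpa : ∀ k, k ≠ r → T.Adj k (pa k) ∧ T.dist (pa k) r < T.dist k r)

section
include hparoot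

lemma pa_iter_root (s : ℕ) : pa^[s] r = r := by
  induction s with
  | zero => rfl
  | succ t ih => rw [Function.iterate_succ_apply', ih, hparoot]

include hpa

lemma dist_pa_le (x : Fin l) : T.dist (pa x) r ≤ T.dist x r := by
  by_cases h : x = r
  · subst h; rw [hparoot]
  · exact (hpa x h).2.le

lemma dist_pa_iter_le (t : ℕ) (x : Fin l) : T.dist (pa^[t] x) r ≤ T.dist x r := by
  induction t with
  | zero => rfl
  | succ s ih =>
    rw [Function.iterate_succ_apply']
    exact le_trans (dist_pa_le pa T r hparoot hpa _) ih

/-- no nontrivial cycles in the parent map away from the root -/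
lemma pa_iter_ne {x : Fin l} (hx : x ≠ r) (t : ℕ) : pa^[t + 1] x ≠ x := by
  intro h
  have h1 : T.dist (pa^[t+1] x) r ≤ T.dist (pa x) r := by
    rw [Function.iterate_succ_apply]
    exact dist_pa_iter_le pa T r hparoot hpa t (pa x)
  rw [h] at h1
  exact absurd (lt_of_le_of_lt h1 (hpa x hx).2) (lt_irrefl _)

end
end Aux

lemma desc_root {l : ℕ} (pa : Fin l → Fin l) (T : SimpleGraph (Fin l)) (r : Fin l)
    (hparoot : pa r = r)
    (hpa : ∀ k, k ≠ r → T.Adj k (pa k) ∧ T.dist (pa k) r < T.dist k r) (m : Fin l) :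
    Desc pa r m := by
  by_cases h : m = r
  · rw [h]; exact desc_refl pa r
  · have hd := (hpa m h).2
    have := desc_root pa T r hparoot hpa (pa m)
    exact desc_of_pa pa this
termination_by T.dist m r
decreasing_by exact hd

noncomputable def chainW {l : ℕ} (pa : Fin l → Fin l) (T : SimpleGraph (Fin l)) (r : Fin l)
    (hpa : ∀ k, k ≠ r → T.Adj k (pa k) ∧ T.dist (pa k) r < T.dist k r) :
    (x : Fin l) → T.Walk x r
  | x =>
    if h : x = r then SimpleGraph.Walk.nil.copy h.symm rfl
    else SimpleGraph.Walk.cons (hpa x h).1 (chainW pa T r hpa (pa x))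
termination_by x => T.dist x r
decreasing_by exact (hpa x h).2

lemma chainW_support {l : ℕ} (pa : Fin l → Fin l) (T : SimpleGraph (Fin l)) (r : Fin l)
    (hpa : ∀ k, k ≠ r → T.Adj k (pa k) ∧ T.dist (pa k) r < T.dist k r) (x : Fin l) :
    ∀ y ∈ (chainW pa T r hpa x).support, Desc pa y x := by
  intro y hy
  rw [chainW] at hy
  by_cases h : x = r
  · rw [dif_pos h] at hy
    simp only [SimpleGraph.Walk.support_copy, SimpleGraph.Walk.support_nil,
      List.mem_singleton] at hy
    rw [hy, h]; exact desc_refl pa r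
  · rw [dif_neg h] at hy
    rw [SimpleGraph.Walk.support_cons, List.mem_cons] at hy
    rcases hy with hy | hy
    · rw [hy]; exact desc_refl pa x
    · have hd := (hpa x h).2
      exact desc_of_pa pa (chainW_support pa T r hpa (pa x) y hy)
termination_by T.dist x r
decreasing_by exact hd

lemma chainW_isPath {l : ℕ} (pa : Fin l → Fin l) (T : SimpleGraph (Fin l)) (r : Fin l)
    (hparoot : pa r = r)
    (hpa : ∀ k, k ≠ r → T.Adj k (pa k) ∧ T.dist (pa k) r < T.dist k r) (x : Fin l) :
    (chainW pa T r hpa x).IsPath := by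
  rw [chainW]
  by_cases h : x = r
  · rw [dif_pos h]
    simp [SimpleGraph.Walk.IsPath.nil]
  · rw [dif_neg h]
    have hd := (hpa x h).2
    refine SimpleGraph.Walk.IsPath.cons (chainW_isPath pa T r hparoot hpa (pa x)) ?_
    intro hx
    obtain ⟨t, ht⟩ := chainW_support pa T r hpa (pa x) x hx
    exact pa_iter_ne pa T r hparoot hpa h t (by rwa [Function.iterate_succ_apply])
termination_by T.dist x r
decreasing_by exact hd

/-- classification of neighbours: in a tree, every neighbour of `a` is either
its parent or a vertex whose parent is `a`. -/
lemma adj_pa {l : ℕ} (pa : Fin l → Fin l) (T : SimpleGraph (Fin l)) (r : Fin l)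
    (hparoot : pa r = r)
    (hpa : ∀ k, k ≠ r → T.Adj k (pa k) ∧ T.dist (pa k) r < T.dist k r)
    (hTtree : T.IsTree) {a b : Fin l} (hab : T.Adj a b) : pa a = b ∨ pa b = a := by
  have key : ∀ (x y : Fin l) (hxy : T.Adj x y),
      (SimpleGraph.Walk.cons hxy (chainW pa T r hpa y)).IsPath → pa x = y := by
    intro x y hxy hP
    have hx : x ≠ r := by
      intro hx
      have h2 := hP.2
      rw [SimpleGraph.Walk.support_cons] at h2
      have := (List.nodup_cons.mp h2).1
      rw [hx] at this
      exact this (SimpleGraph.Walk.end_mem_support _)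
    have h1 := (hTtree.existsUnique_path x r).unique hP (chainW_isPath pa T r hparoot hpa x)
    have h2 : (SimpleGraph.Walk.cons hxy (chainW pa T r hpa y)).getVert 1 = y := by
      simp [SimpleGraph.Walk.getVert_cons_succ, SimpleGraph.Walk.getVert_zero]
    have h3 : (chainW pa T r hpa x).getVert 1 = pa x := by
      rw [chainW, dif_neg hx]
      simp [SimpleGraph.Walk.getVert_cons_succ, SimpleGraph.Walk.getVert_zero]
    rw [h1, h3] at h2
    exact h2
  by_cases hP : (SimpleGraph.Walk.cons hab (chainW pa T r hpa b)).IsPath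
  · exact Or.inl (key a b hab hP)
  by_cases hQ : (SimpleGraph.Walk.cons hab.symm (chainW pa T r hpa a)).IsPath
  · exact Or.inr (key b a hab.symm hQ)
  exfalso
  have ha : a ∈ (chainW pa T r hpa b).support := by
    by_contra hc
    exact hP ((chainW_isPath pa T r hparoot hpa b).cons hc)
  have hb : b ∈ (chainW pa T r hpa a).support := by
    by_contra hc
    exact hQ ((chainW_isPath pa T r hparoot hpa a).cons hc)
  obtain ⟨t, ht⟩ := chainW_support pa T r hpa b a ha
  obtain ⟨u, hu⟩ := chainW_support pa T r hpa a b hb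
  have har : a ≠ r := by
    intro har
    have hb' : b = r := by rw [har, pa_iter_root pa r hparoot] at hu; exact hu.symm
    exact hab.ne (har.trans hb'.symm)
  have htu : pa^[t + u] a = a := by
    rw [Function.iterate_add_apply, hu, ht]
  cases u with
  | zero => exact hab.ne hu
  | succ u' =>
    have he : t + (u' + 1) = (t + u') + 1 := by omega
    rw [he] at htu
    exact pa_iter_ne pa T r hparoot hpa har (t + u') htu

lemma walk_desc_or_pa_mem {l : ℕ} (pa : Fin l → Fin l) (T : SimpleGraph (Fin l)) (r : Fin l)
    (hparoot : pa r = r)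
    (hpa : ∀ k, k ≠ r → T.Adj k (pa k) ∧ T.dist (pa k) r < T.dist k r)
    (hTtree : T.IsTree) {m k : Fin l} (p : T.Walk m k) (hp : p.IsPath) :
    Desc pa m k ∨ pa m ∈ p.support := by
  induction p with
  | nil => exact Or.inl (desc_refl pa _)
  | @cons m x k h q ih =>
    rw [SimpleGraph.Walk.cons_isPath_iff] at hp
    rcases adj_pa pa T r hparoot hpa hTtree h with hmx | hxm
    · right
      rw [SimpleGraph.Walk.support_cons, hmx]
      exact List.mem_cons_of_mem _ (SimpleGraph.Walk.start_mem_support q)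
    · rcases ih hp.1 with hd | hm
      · left
        have := desc_pa pa hd
        rwa [hxm] at this
      · rw [hxm] at hm
        exact absurd hm hp.2

lemma walk_mem_of_desc {l : ℕ} (pa : Fin l → Fin l) (T : SimpleGraph (Fin l)) (r : Fin l)
    (hparoot : pa r = r)
    (hpa : ∀ k, k ≠ r → T.Adj k (pa k) ∧ T.dist (pa k) r < T.dist k r)
    (hTtree : T.IsTree) {m k : Fin l} (p : T.Walk m k) (hp : p.IsPath)
    (x : Fin l) (hxm : Desc pa x m) (hxk : ¬ Desc pa x k) : x ∈ p.support := by
  induction p with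
  | nil => exact absurd hxm hxk
  | @cons m y k h q ih =>
    rw [SimpleGraph.Walk.cons_isPath_iff] at hp
    by_cases hxm' : x = m
    · rw [SimpleGraph.Walk.support_cons, hxm']
      exact List.mem_cons_self
    · rw [SimpleGraph.Walk.support_cons]
      refine List.mem_cons_of_mem _ ?_
      rcases adj_pa pa T r hparoot hpa hTtree h with hmy | hym
      · have h1 : Desc pa x (pa m) := desc_of_ne pa hxm hxm'
        rw [hmy] at h1
        exact ih hp.1 h1 hxk
      · have h1 : Desc pa x y := by
          refine desc_of_pa pa ?_
          rwa [hym]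
        exact ih hp.1 h1 hxk

lemma not_desc_child {l : ℕ} (pa : Fin l → Fin l) (T : SimpleGraph (Fin l)) (r : Fin l)
    (hparoot : pa r = r)
    (hpa : ∀ k, k ≠ r → T.Adj k (pa k) ∧ T.dist (pa k) r < T.dist k r)
    {j k : Fin l} (hjr : j ≠ r) (hjk : pa j = k) : ¬ Desc pa j k := by
  rintro ⟨t, ht⟩
  by_cases hkr : k = r
  · rw [hkr, pa_iter_root pa r hparoot] at ht
    exact hjr ht.symm
  cases t with
  | zero =>
    have := (hpa j hjr).1.ne
    rw [hjk, ← ht] at this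
    exact this rfl
  | succ t' =>
    have h1 : T.dist (pa^[t' + 1] k) r ≤ T.dist (pa k) r := by
      rw [Function.iterate_succ_apply]
      exact dist_pa_iter_le pa T r hparoot hpa t' (pa k)
    rw [ht] at h1
    have h2 : T.dist (pa k) r < T.dist k r := (hpa k hkr).2
    have h3 : T.dist (pa j) r < T.dist j r := (hpa j hjr).2
    rw [hjk] at h3
    omega

lemma child_disjoint {l : ℕ} (pa : Fin l → Fin l) (T : SimpleGraph (Fin l)) (r : Fin l)
    (hparoot : pa r = r)
    (hpa : ∀ k, k ≠ r → T.Adj k (pa k) ∧ T.dist (pa k) r < T.dist k r)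
    {j j' k m : Fin l} (hj : j ≠ r) (hj' : j' ≠ r) (hjk : pa j = k) (hjk' : pa j' = k)
    (h1 : Desc pa j m) (h2 : Desc pa j' m) : j = j' := by
  have key : ∀ (a b : Fin l), a ≠ r → b ≠ r → pa a = k → pa b = k →
      ∀ (s s' : ℕ), s ≤ s' → pa^[s] m = a → pa^[s'] m = b → a = b := by
    intro a b har hbr hak hbk s s' hss hs hs'
    rcases Nat.exists_eq_add_of_le hss with ⟨w, rfl⟩
    cases w with
    | zero => rw [← hs, ← hs']; simp
    | succ w' =>
      exfalso
      have hb : pa^[w'] k = b := by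
        have : s + (w' + 1) = (w' + 1) + s := by omega
        rw [this, Function.iterate_add_apply, hs] at hs'
        rw [Function.iterate_succ_apply, hak] at hs'
        exact hs'
      have hd1 : T.dist (pa^[w'] k) r ≤ T.dist k r := dist_pa_iter_le pa T r hparoot hpa w' k
      rw [hb] at hd1
      have hd2 : T.dist (pa b) r < T.dist b r := (hpa b hbr).2
      rw [hbk] at hd2
      omega
  obtain ⟨s, hs⟩ := h1
  obtain ⟨s', hs'⟩ := h2
  rcases le_total s s' with h | h
  · exact key j j' hj hj' hjk hjk' s s' h hs hs'
  · exact (key j' j hj' hj hjk' hjk s' s h hs' hs).symm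

lemma desc_decomp {l : ℕ} (pa : Fin l → Fin l) (r : Fin l) (hparoot : pa r = r)
    {k m : Fin l} (h : Desc pa k m) (hne : m ≠ k) :
    ∃ j, j ≠ r ∧ pa j = k ∧ Desc pa j m := by
  classical
  have hex : ∃ s, pa^[s] m = k := h
  set s₀ := Nat.find hex with hs₀
  have hfind : pa^[s₀] m = k := Nat.find_spec hex
  have hpos : s₀ ≠ 0 := by
    intro h0
    rw [h0] at hfind
    exact hne hfind
  obtain ⟨t, ht⟩ := Nat.exists_eq_succ_of_ne_zero hpos
  have hfind' : pa (pa^[t] m) = k := by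
    rw [← Function.iterate_succ_apply' pa t m, ← ht]
    exact hfind
  refine ⟨pa^[t] m, ?_, hfind', ⟨t, rfl⟩⟩
  intro hr
  rw [hr, hparoot] at hfind'
  have h2 : pa^[t] m = k := hr.trans hfind'
  exact Nat.find_min hex (by omega : t < s₀) h2

lemma sum_dite_mem {n : ℕ} (s : Finset (Fin n)) (g : (i : Fin n) → i ∈ s → ℝ) :
    (∑ j : {i // i ∈ s}, g j.1 j.2) = ∑ i : Fin n, (if h : i ∈ s then g i h else 0) := by
  classical
  rw [← Finset.sum_subset (Finset.subset_univ s)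
    (by intro x _ hx; rw [dif_neg hx])]
  rw [Finset.sum_dite_of_true (fun i hi => hi)]

lemma mem_orth_iff {n l : ℕ} (γ : Fin l → Finset (Fin n))
    (st : EuclideanSpace ℝ ((k : Fin l) × {i : Fin n // i ∈ γ k})) :
    st ∈ (LinearMap.range (Emap γ))ᗮ
    ↔ ∀ i : Fin n, (∑ k : Fin l, if h : i ∈ γ k then st ⟨k, ⟨i, h⟩⟩ else 0) = 0 := by
  classical
  rw [Submodule.mem_orthogonal]
  have hinner : ∀ x : EuclideanSpace ℝ (Fin n),
      (inner ℝ (Emap γ x) st : ℝ) = ∑ i : Fin n, x i * ∑ k : Fin l,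
        (if h : i ∈ γ k then st ⟨k, ⟨i, h⟩⟩ else 0) := by
    intro x
    rw [PiLp.inner_apply]
    have h1 : ∀ q : (k : Fin l) × {i : Fin n // i ∈ γ k},
        (inner ℝ ((Emap γ x) q) (st q) : ℝ) = x q.2.1 * st q := by
      intro q
      simp [RCLike.inner_apply, Emap, LinearMap.coe_mk, AddHom.coe_mk, mul_comm]
      exact Or.inl rfl
    rw [Finset.sum_congr rfl (fun q _ => h1 q)]
    rw [← Finset.univ_sigma_univ, Finset.sum_sigma]
    have h2 : ∀ k : Fin l, (∑ j : {i : Fin n // i ∈ γ k}, x j.1 * st ⟨k, j⟩)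
        = ∑ i : Fin n, (if h : i ∈ γ k then x i * st ⟨k, ⟨i, h⟩⟩ else 0) :=
      fun k => sum_dite_mem (γ k) (fun i h => x i * st ⟨k, ⟨i, h⟩⟩)
    rw [Finset.sum_congr rfl (fun k _ => h2 k)]
    rw [Finset.sum_comm]
    refine Finset.sum_congr rfl (fun i _ => ?_)
    rw [Finset.mul_sum]
    refine Finset.sum_congr rfl (fun k _ => ?_)
    by_cases h : i ∈ γ k
    · rw [dif_pos h, dif_pos h]
    · rw [dif_neg h, dif_neg h, mul_zero]
  constructor
  · intro H i
    have := H (Emap γ (EuclideanSpace.single i 1)) ⟨_, rfl⟩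
    rw [hinner] at this
    have h3 : ∀ i' : Fin n, (EuclideanSpace.single i (1:ℝ)) i'
        * (∑ k : Fin l, if h : i' ∈ γ k then st ⟨k, ⟨i', h⟩⟩ else 0)
        = if i' = i then (∑ k : Fin l, if h : i' ∈ γ k then st ⟨k, ⟨i', h⟩⟩ else 0) else 0 := by
      intro i'
      rw [EuclideanSpace.single_apply]
      split <;> simp
    rw [Finset.sum_congr rfl (fun i' _ => h3 i')] at this
    rw [Finset.sum_ite_eq' Finset.univ i
      (fun i' => ∑ k : Fin l, if h : i' ∈ γ k then st ⟨k, ⟨i', h⟩⟩ else 0)] at this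
    simpa using this
  · rintro H u ⟨x, rfl⟩
    rw [hinner]
    refine Finset.sum_eq_zero (fun i _ => ?_)
    rw [H i, mul_zero]

theorem stmt17 {n l : ℕ} (γ : Fin l → Finset (Fin n))
    (hcover : ∀ i : Fin n, ∃ k, i ∈ γ k)
    (T : SimpleGraph (Fin l)) (hTsub : T ≤ interGraph γ) (hTtree : T.IsTree)
    (hrip : RIP γ T)
    (r : Fin l) (pa : Fin l → Fin l) (hparoot : pa r = r)
    (hpa : ∀ k, k ≠ r → T.Adj k (pa k) ∧ T.dist (pa k) r < T.dist k r)
    (st : EuclideanSpace ℝ ((k : Fin l) × {i : Fin n // i ∈ γ k})) :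
    st ∈ (LinearMap.range (Emap γ))ᗮ
    ↔ ∃ u : (j : Fin l) →
          ({i // i ∈ (if j = r then (∅ : Finset (Fin n)) else γ j ∩ γ (pa j))} → ℝ),
        ∀ (k : Fin l) (i : {i : Fin n // i ∈ γ k}),
          st ⟨k, i⟩ =
            (Eemb (if k = r then (∅ : Finset (Fin n)) else γ k ∩ γ (pa k)) (u k)
              - ∑ j ∈ Finset.univ.filter (fun j => j ≠ r ∧ pa j = k),
                  Eemb (if j = r then (∅ : Finset (Fin n)) else γ j ∩ γ (pa j)) (u j))
              i.1 := by
  classical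
  rw [mem_orth_iff]
  constructor
  · -- hard direction
    intro H
    refine ⟨fun j iv => ∑ m : Fin l,
      if Desc pa j m then (if h : iv.1 ∈ γ m then st ⟨m, ⟨iv.1, h⟩⟩ else 0) else 0, ?_⟩
    intro k i
    obtain ⟨x, hx⟩ := i
    set F : Fin l → ℝ := fun m => if h : x ∈ γ m then st ⟨m, ⟨x, h⟩⟩ else 0 with hF
    set A : Fin l → ℝ := fun j => ∑ m : Fin l, if Desc pa j m then F m else 0 with hAdef
    set C : Finset (Fin l) := Finset.univ.filter (fun j => j ≠ r ∧ pa j = k) with hC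
    have hkey : ∀ j m, j ≠ r → pa j = k → Desc pa j m → x ∈ γ m → x ∈ γ j := by
      intro j m hjr hjk hdm hxm
      obtain ⟨p, hp, -⟩ := hTtree.existsUnique_path m k
      have hjmem : j ∈ p.support := walk_mem_of_desc pa T r hparoot hpa hTtree p hp j hdm
        (not_desc_child pa T r hparoot hpa hjr hjk)
      exact hrip m k j p hp hjmem (Finset.mem_inter.mpr ⟨hxm, hx⟩)
    have htop : (k = r ∨ x ∉ γ (pa k)) → ∀ m, x ∈ γ m → Desc pa k m := by
      intro hcase m hxm
      by_cases hkr : k = r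
      · rw [hkr]; exact desc_root pa T r hparoot hpa m
      · obtain ⟨p, hp, -⟩ := hTtree.existsUnique_path m k
        rcases walk_desc_or_pa_mem pa T r hparoot hpa hTtree p.reverse hp.reverse with hd | hmem
        · exact hd
        · rw [SimpleGraph.Walk.support_reverse, List.mem_reverse] at hmem
          have := hrip m k (pa k) p hp hmem (Finset.mem_inter.mpr ⟨hxm, hx⟩)
          exact absurd this (hcase.resolve_left hkr)
    have claim2 : ∀ j ∈ C, x ∉ γ j → A j = 0 := by
      intro j hj hxj
      rw [hC, Finset.mem_filter] at hj
      refine Finset.sum_eq_zero (fun m _ => ?_)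
      by_cases hd : Desc pa j m
      · rw [if_pos hd]
        by_cases hxm : x ∈ γ m
        · exact absurd (hkey j m hj.2.1 hj.2.2 hd hxm) hxj
        · exact dif_neg hxm
      · rw [if_neg hd]
    have claim1 : ∑ j ∈ C, A j = A k - F k := by
      have step1 : ∑ j ∈ C, A j = ∑ m : Fin l,
          if Desc pa k m ∧ m ≠ k then F m else 0 := by
        rw [hAdef]
        rw [Finset.sum_comm]
        refine Finset.sum_congr rfl (fun m _ => ?_)
        by_cases hd : Desc pa k m ∧ m ≠ k
        · obtain ⟨j0, hj0r, hj0k, hj0d⟩ := desc_decomp pa r hparoot hd.1 hd.2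
          rw [if_pos hd]
          rw [Finset.sum_eq_single j0]
          · rw [if_pos hj0d]
          · intro j hj hne
            rw [hC, Finset.mem_filter] at hj
            refine if_neg (fun hdj => hne ?_)
            exact child_disjoint pa T r hparoot hpa hj.2.1 hj0r hj.2.2 hj0k hdj hj0d
          · intro habs
            exact absurd (by rw [hC]; simp [hj0r, hj0k] : j0 ∈ C) habs
        · rw [if_neg hd]
          refine Finset.sum_eq_zero (fun j hj => ?_)
          rw [hC, Finset.mem_filter] at hj
          refine if_neg (fun hdj => hd ⟨?_, ?_⟩)
          · have := desc_pa pa hdj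
            rwa [hj.2.2] at this
          · rintro rfl
            exact not_desc_child pa T r hparoot hpa hj.2.1 hj.2.2 hdj
      rw [step1, eq_sub_iff_add_eq]
      have hfin : (∑ m : Fin l, if Desc pa k m ∧ m ≠ k then F m else 0) + F k
          = ∑ m : Fin l, if Desc pa k m then F m else 0 := by
        have hFk : F k = ∑ m : Fin l, if m = k then F m else 0 := by
          rw [Finset.sum_ite_eq' Finset.univ k F]; simp
        rw [hFk, ← Finset.sum_add_distrib]
        refine Finset.sum_congr rfl (fun m _ => ?_)
        by_cases hmk : m = k
        · subst hmk; simp [desc_refl pa m]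
        · by_cases hd : Desc pa k m
          · simp [hd, hmk]
          · simp [hd, hmk]
      rw [hfin]
    have claim3 : (k = r ∨ x ∉ γ (pa k)) → A k = 0 := by
      intro hcase
      have : ∀ m : Fin l, (if Desc pa k m then F m else 0) = F m := by
        intro m
        by_cases hd : Desc pa k m
        · rw [if_pos hd]
        · rw [if_neg hd]
          exact (show F m = 0 from dif_neg (fun hxm => hd (htop hcase m hxm))).symm
      have h4 : A k = ∑ m : Fin l, F m := Finset.sum_congr rfl (fun m _ => this m)
      rw [h4]
      exact H x
    -- now the assembly
    have hEembj : ∀ j ∈ C,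
        Eemb (if j = r then (∅ : Finset (Fin n)) else γ j ∩ γ (pa j))
          (fun iv => ∑ m : Fin l,
            if Desc pa j m then (if h : iv.1 ∈ γ m then st ⟨m, ⟨iv.1, h⟩⟩ else 0) else 0) x
        = A j := by
      intro j hj
      rw [hC, Finset.mem_filter] at hj
      simp only [Eemb]
      by_cases hxj : x ∈ γ j
      · have hmem : x ∈ (if j = r then (∅ : Finset (Fin n)) else γ j ∩ γ (pa j)) := by
          rw [if_neg hj.2.1, hj.2.2]
          exact Finset.mem_inter.mpr ⟨hxj, hx⟩
        rw [dif_pos hmem]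
      · have hmem : x ∉ (if j = r then (∅ : Finset (Fin n)) else γ j ∩ γ (pa j)) := by
          rw [if_neg hj.2.1]
          intro hc
          exact hxj (Finset.mem_inter.mp hc).1
        rw [dif_neg hmem]
        exact (claim2 j (by rw [hC, Finset.mem_filter]; exact ⟨Finset.mem_univ _, hj.2⟩) hxj).symm
    have hEembk :
        Eemb (if k = r then (∅ : Finset (Fin n)) else γ k ∩ γ (pa k))
          (fun iv => ∑ m : Fin l,
            if Desc pa k m then (if h : iv.1 ∈ γ m then st ⟨m, ⟨iv.1, h⟩⟩ else 0) else 0) x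
        = A k := by
      simp only [Eemb]
      by_cases hmem : x ∈ (if k = r then (∅ : Finset (Fin n)) else γ k ∩ γ (pa k))
      · rw [dif_pos hmem]
      · rw [dif_neg hmem]
        refine (claim3 ?_).symm
        by_cases hkr : k = r
        · exact Or.inl hkr
        · refine Or.inr (fun hpak => hmem ?_)
          rw [if_neg hkr]
          exact Finset.mem_inter.mpr ⟨hx, hpak⟩
    show st ⟨k, ⟨x, hx⟩⟩ = _
    rw [Pi.sub_apply, Finset.sum_apply]
    rw [hEembk, Finset.sum_congr rfl hEembj, claim1]
    rw [sub_sub_cancel]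
    exact (show F k = st ⟨k, ⟨x, hx⟩⟩ from dif_pos hx).symm
  · -- easy direction
    rintro ⟨u, hu⟩ x
    set g : Fin l → ℝ := fun j =>
      Eemb (if j = r then (∅ : Finset (Fin n)) else γ j ∩ γ (pa j)) (u j) x with hg
    have hterm : ∀ k : Fin l, (if h : x ∈ γ k then st ⟨k, ⟨x, h⟩⟩ else 0)
        = g k - ∑ j ∈ Finset.univ.filter (fun j => j ≠ r ∧ pa j = k), g j := by
      intro k
      by_cases h : x ∈ γ k
      · rw [dif_pos h, hu k ⟨x, h⟩]
        rw [Pi.sub_apply, Finset.sum_apply]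
      · rw [dif_neg h]
        have hg0 : g k = 0 := by
          simp only [hg, Eemb]
          refine dif_neg (fun hc => h ?_)
          by_cases hkr : k = r
          · rw [if_pos hkr] at hc; exact absurd hc (Finset.notMem_empty x)
          · rw [if_neg hkr] at hc; exact (Finset.mem_inter.mp hc).1
        have hs0 : ∑ j ∈ Finset.univ.filter (fun j => j ≠ r ∧ pa j = k), g j = 0 := by
          refine Finset.sum_eq_zero (fun j hj => ?_)
          rw [Finset.mem_filter] at hj
          simp only [hg, Eemb]
          refine dif_neg (fun hc => h ?_)
          rw [if_neg hj.2.1, hj.2.2] at hc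
          exact (Finset.mem_inter.mp hc).2
        rw [hg0, hs0, sub_zero]
    rw [Finset.sum_congr rfl (fun k _ => hterm k), Finset.sum_sub_distrib]
    have hswap : (∑ k : Fin l, ∑ j ∈ Finset.univ.filter (fun j => j ≠ r ∧ pa j = k), g j)
        = ∑ j : Fin l, g j := by
      rw [Finset.sum_congr rfl (fun k _ => Finset.sum_filter _ _)]
      rw [Finset.sum_comm]
      refine Finset.sum_congr rfl (fun j _ => ?_)
      by_cases hj : j = r
      · subst hj
        have hgr : g j = 0 := by
          simp [hg, Eemb]
        simp [hgr]
      · simp only [hj, ne_eq, not_false_eq_true, true_and]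
        rw [Finset.sum_ite_eq Finset.univ (pa j) (fun _ => g j)]
        simp
    rw [hswap, sub_self]
end
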